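/- arXiv:1907.08652 — 2 statements merged into one kernel-verified Lean document; each statement's English description precedes it below -/
import Mathlib

section
/- Let f : M → M be a hyperbolic homeomorphism with local product structure on a compact metric space (M,d), let A : M → GL(d,ℝ) be ν-Hölder continuous, α an automorphism of GL(d,ℝ), and suppose the α-twisted cocycle A_α is fiber-bunched. Then the stable holonomies H^{s,A,α}_{yz} = lim_{n→∞} α^{-n}(A_α^n(z)^{-1} A_α^n(y)) satisfy the equivariance relation H^{s,A,α}_{f^m(y) f^m(z)} = A_α^m(z) · α^m(H^{s,A,α}_{yz}) · A_α^m(y)^{-1} for every x ∈ M, all y, z ∈ W^s(x) and every m ∈ ℤ; the analogous relation holds for the unstable holonomies H^{u,A,α} when y, z ∈ W^u(x). -/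
open scoped Matrix.Norms.L2Operator

noncomputable section

/-- The `α`-twisted cocycle generated by `A` over `f`, at nonnegative times. -/
def twcN {M G : Type*} [Group G] (f : Equiv.Perm M) (α : MulAut G) (A : M → G) :
    ℕ → M → G
  | 0, _ => 1
  | n + 1, x => A ((f ^ n) x) * α (twcN f α A n x)

/-- The `α`-twisted cocycle generated by `A` over `f`, at all integer times. -/
def twc {M G : Type*} [Group G] (f : Equiv.Perm M) (α : MulAut G) (A : M → G) :
    ℤ → M → G
  | Int.ofNat n, x => twcN f α A n x
  | Int.negSucc n, x =>
      (α ^ (Int.negSucc n)) ((twcN f α A (n + 1) ((f ^ (Int.negSucc n)) x))⁻¹)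

/-- The local stable set `W^s_ε(x)`. -/
def localStable {M : Type*} [MetricSpace M] (f : Equiv.Perm M) (ε : ℝ) (x : M) :
    Set M :=
  {y | ∀ n : ℕ, dist ((f ^ n) x) ((f ^ n) y) ≤ ε}

/-- The local unstable set `W^u_ε(x)`. -/
def localUnstable {M : Type*} [MetricSpace M] (f : Equiv.Perm M) (ε : ℝ) (x : M) :
    Set M :=
  {y | ∀ n : ℕ, dist ((f⁻¹ ^ n) x) ((f⁻¹ ^ n) y) ≤ ε}

/-- The global stable set `W^s(x) = ⋃_{n ≥ 0} f^{-n}(W^s_ε(f^n(x)))`. -/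
def globalStable {M : Type*} [MetricSpace M] (f : Equiv.Perm M) (ε : ℝ) (x : M) :
    Set M :=
  {y | ∃ n : ℕ, (f ^ n) y ∈ localStable f ε ((f ^ n) x)}

/-- The global unstable set `W^u(x) = ⋃_{n ≥ 0} f^{n}(W^u_ε(f^{-n}(x)))`. -/
def globalUnstable {M : Type*} [MetricSpace M] (f : Equiv.Perm M) (ε : ℝ) (x : M) :
    Set M :=
  {y | ∃ n : ℕ, (f⁻¹ ^ n) y ∈ localUnstable f ε ((f⁻¹ ^ n) x)}

/-- `f` is a hyperbolic homeomorphism with local product structure, with constants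
`C, ε, λ, τ`. -/
structure IsHyperbolicLPS {M : Type*} [MetricSpace M] (f : M ≃ₜ M)
    (C ε lam τ : ℝ) : Prop where
  C_pos : 0 < C
  eps_pos : 0 < ε
  lam_pos : 0 < lam
  tau_pos : 0 < τ
  stable_contr : ∀ x y₁ y₂ : M, y₁ ∈ localStable f.toEquiv ε x →
    y₂ ∈ localStable f.toEquiv ε x → ∀ n : ℕ,
      dist ((f.toEquiv ^ n) y₁) ((f.toEquiv ^ n) y₂) ≤
        C * Real.exp (-lam * n) * dist y₁ y₂
  unstable_contr : ∀ x y₁ y₂ : M, y₁ ∈ localUnstable f.toEquiv ε x →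
    y₂ ∈ localUnstable f.toEquiv ε x → ∀ n : ℕ,
      dist ((f.toEquiv⁻¹ ^ n) y₁) ((f.toEquiv⁻¹ ^ n) y₂) ≤
        C * Real.exp (-lam * n) * dist y₁ y₂
  bracket : ∃ br : {p : M × M // dist p.1 p.2 ≤ τ} → M, Continuous br ∧
    ∀ p : {p : M × M // dist p.1 p.2 ≤ τ},
      localStable f.toEquiv ε p.1.1 ∩ localUnstable f.toEquiv ε p.1.2 = {br p}

/-- `A` is `ν`-Hölder continuous (w.r.t. the operator norm on matrices). -/
def IsHolder {M : Type*} [MetricSpace M] {d : ℕ} (ν : ℝ)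
    (A : M → GL (Fin d) ℝ) : Prop :=
  ∃ C > 0, ∀ x y : M,
    ‖(A x : Matrix (Fin d) (Fin d) ℝ) - (A y : Matrix (Fin d) (Fin d) ℝ)‖ ≤
      C * dist x y ^ ν

/-- The fiber-bunching inequalities (i), (ii), (iii) with constants `ρ, θ`. -/
def FiberBunchedWith {M : Type*} [MetricSpace M] {d : ℕ} (f : Equiv.Perm M)
    (α : MulAut (GL (Fin d) ℝ)) (A : M → GL (Fin d) ℝ) (ρ θ : ℝ) : Prop :=
  ∃ C > 0,
    (∀ (n : ℤ) (x : M),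
      ‖(((α ^ (-n)) (twc f α A n x) : GL (Fin d) ℝ) : Matrix (Fin d) (Fin d) ℝ)‖ *
        ‖(((α ^ (-n)) ((twc f α A n x)⁻¹) : GL (Fin d) ℝ) : Matrix (Fin d) (Fin d) ℝ)‖ <
        C * Real.exp (θ * |(n : ℝ)|)) ∧
    (∀ (n : ℤ) (T₁ T₂ : GL (Fin d) ℝ),
      ‖(((α ^ n) T₁ : GL (Fin d) ℝ) : Matrix (Fin d) (Fin d) ℝ) -
          (((α ^ n) T₂ : GL (Fin d) ℝ) : Matrix (Fin d) (Fin d) ℝ)‖ ≤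
        C * Real.exp (ρ * |(n : ℝ)|) *
          ‖(T₁ : Matrix (Fin d) (Fin d) ℝ) - (T₂ : Matrix (Fin d) (Fin d) ℝ)‖) ∧
    (∀ (n : ℤ) (T : GL (Fin d) ℝ),
      ‖(((α ^ n) T : GL (Fin d) ℝ) : Matrix (Fin d) (Fin d) ℝ)‖ ≤
        C * Real.exp (ρ * |(n : ℝ)|) * ‖(T : Matrix (Fin d) (Fin d) ℝ)‖)

/-- The twisted cocycle generated by `A` is fiber-bunched. -/
def FiberBunched {M : Type*} [MetricSpace M] {d : ℕ} (f : Equiv.Perm M)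
    (α : MulAut (GL (Fin d) ℝ)) (A : M → GL (Fin d) ℝ) (ν lam : ℝ) : Prop :=
  ∃ ρ θ : ℝ, 0 < ρ ∧ 0 < θ ∧ 5 * ρ + 2 * θ < ν * lam ∧ FiberBunchedWith f α A ρ θ

/-- `H` is the stable holonomy `H^{s,A,α}_{a b}`. -/
def IsStableHol {M : Type*} [MetricSpace M] {d : ℕ} (f : Equiv.Perm M)
    (α : MulAut (GL (Fin d) ℝ)) (A : M → GL (Fin d) ℝ) (a b : M)
    (H : GL (Fin d) ℝ) : Prop :=
  Filter.Tendsto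
    (fun n : ℕ =>
      (((α ^ (-(n : ℤ))) ((twc f α A n b)⁻¹ * twc f α A n a) : GL (Fin d) ℝ) :
        Matrix (Fin d) (Fin d) ℝ))
    Filter.atTop (nhds (H : Matrix (Fin d) (Fin d) ℝ))

/-- `H` is the unstable holonomy `H^{u,A,α}_{a b}`. -/
def IsUnstableHol {M : Type*} [MetricSpace M] {d : ℕ} (f : Equiv.Perm M)
    (α : MulAut (GL (Fin d) ℝ)) (A : M → GL (Fin d) ℝ) (a b : M)
    (H : GL (Fin d) ℝ) : Prop :=
  Filter.Tendsto
    (fun n : ℕ =>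
      (((α ^ (n : ℤ)) ((twc f α A (-(n : ℤ)) b)⁻¹ * twc f α A (-(n : ℤ)) a) :
          GL (Fin d) ℝ) : Matrix (Fin d) (Fin d) ℝ))
    Filter.atTop (nhds (H : Matrix (Fin d) (Fin d) ℝ))

end

section Coc
variable {M G : Type*} [Group G] (f : Equiv.Perm M) (α : MulAut G) (A : M → G)

lemma autz (a b : ℤ) (g : G) : (α ^ a) ((α ^ b) g) = (α ^ (a + b)) g := by
  rw [zpow_add, MulAut.mul_apply]

lemma aut_one_z (b : ℤ) (g : G) : α ((α ^ b) g) = (α ^ (b + 1)) g := by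
  rw [← MulAut.mul_apply]; congr 1; rw [add_comm, zpow_one_add]

lemma aut_inv_z (b : ℤ) (g : G) : α⁻¹ ((α ^ b) g) = (α ^ (b - 1)) g := by
  rw [← zpow_neg_one, autz, show (-1 + b) = b - 1 by ring]

lemma permz (a b : ℤ) (x : M) : (f ^ (a + b)) x = (f ^ a) ((f ^ b) x) := by
  rw [zpow_add, Equiv.Perm.mul_apply]

lemma twcN_add (k l : ℕ) (x : M) :
    twcN f α A (k + l) x = twcN f α A k ((f ^ l) x) * (α ^ k) (twcN f α A l x) := by
  induction k with
  | zero => simp [twcN]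
  | succ k ih =>
      have h1 : k + 1 + l = (k + l) + 1 := by omega
      rw [h1]
      simp only [twcN, ih, map_mul, pow_succ, Equiv.Perm.mul_apply, MulAut.mul_apply]
      rw [pow_add, Equiv.Perm.mul_apply, mul_assoc]
      congr 2
      rw [← MulAut.mul_apply, ← MulAut.mul_apply, ← pow_succ, ← pow_succ']

lemma twc_natCast (n : ℕ) (x : M) : twc f α A (n : ℤ) x = twcN f α A n x := rfl

lemma twc_zero (x : M) : twc f α A 0 x = 1 := rfl

lemma twc_neg_nat (n : ℕ) (x : M) :
    twc f α A (-(n : ℤ)) x = (α ^ (-(n:ℤ))) ((twc f α A n ((f ^ (-(n:ℤ))) x))⁻¹) := by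
  rcases n with _ | k
  · simp [twc, twcN]
  · have h : -((k+1 : ℕ) : ℤ) = Int.negSucc k := rfl
    rw [h]
    rfl

lemma twc_neg (n : ℤ) (x : M) :
    twc f α A (-n) x = (α ^ (-n)) ((twc f α A n ((f ^ (-n)) x))⁻¹) := by
  rcases n with n | k
  · exact twc_neg_nat f α A n x
  · have h : -(Int.negSucc k) = ((k+1 : ℕ) : ℤ) := rfl
    rw [h]
    have h3 : (f ^ (-((k+1:ℕ):ℤ))) ((f ^ ((k+1:ℕ):ℤ)) x) = x := by
      rw [← permz, show -((k+1:ℕ):ℤ) + ((k+1:ℕ):ℤ) = 0 by ring, zpow_zero,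
        Equiv.Perm.one_apply]
    have h2 := twc_neg_nat f α A (k+1) ((f ^ ((k+1:ℕ) : ℤ)) x)
    rw [h3] at h2
    have h5 : (Int.negSucc k) = -((k+1:ℕ):ℤ) := rfl
    rw [h5, h2, ← map_inv, inv_inv, autz,
      show ((k+1:ℕ):ℤ) + -((k+1:ℕ):ℤ) = 0 by ring, zpow_zero, MulAut.one_apply]

lemma twc_succ (n : ℤ) (x : M) :
    twc f α A (n + 1) x = A ((f ^ n) x) * α (twc f α A n x) := by
  rcases n with n | k
  · show twc f α A ((n:ℤ) + 1) x = A ((f ^ (n:ℤ)) x) * α (twc f α A (n:ℤ) x)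
    rw [show (n:ℤ) + 1 = ((n+1:ℕ):ℤ) by push_cast; ring, twc_natCast, twc_natCast,
      zpow_natCast]
    rfl
  · have h2 : (Int.negSucc k) = -((k:ℤ)+1) := Int.negSucc_eq k
    have h1 : (Int.negSucc k) + 1 = -(k : ℤ) := by rw [h2]; ring
    rw [h1, h2]
    rw [twc_neg_nat f α A k x, twc_neg f α A ((k:ℤ)+1) x]
    set y := (f ^ (-((k:ℤ)+1))) x with hy
    have h4 : (f ^ (-(k:ℤ))) x = f y := by
      rw [show (-(k:ℤ)) = ((1:ℤ) + (-((k:ℤ)+1))) by ring, permz, zpow_one, hy]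
    rw [h4]
    have h6 : twc f α A ((k:ℤ)+1) y = twcN f α A (k+1) y := by
      rw [show ((k:ℤ)+1) = ((k+1:ℕ):ℤ) by push_cast; ring, twc_natCast]
    have h6' : twc f α A (k:ℤ) (f y) = twcN f α A k (f y) := twc_natCast ..
    rw [h6, h6']
    have h7 : twcN f α A (k+1) y = twcN f α A k (f y) * (α ^ k) (A y) := by
      have h := twcN_add f α A k 1 y
      rw [pow_one] at h
      rw [h, show twcN f α A 1 y = A y from by simp [twcN]]
    have h8 : twcN f α A k (f y) = twcN f α A (k+1) y * ((α ^ k) (A y))⁻¹ := by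
      rw [h7]; group
    rw [h8, mul_inv_rev, inv_inv, map_mul]
    have h9 : (α ^ (-(k:ℤ))) ((α ^ k) (A y)) = A y := by
      rw [← zpow_natCast α k, autz, show (-(k:ℤ) + k) = 0 by ring, zpow_zero,
        MulAut.one_apply]
    rw [h9]
    congr 1
    rw [aut_one_z, show (-((k:ℤ)+1) + 1) = -(k:ℤ) by ring]

lemma twc_add (k l : ℤ) (x : M) :
    twc f α A (k + l) x = twc f α A k ((f ^ l) x) * (α ^ k) (twc f α A l x) := by
  induction k using Int.induction_on with
  | zero => simp [twc_zero]
  | succ k ih =>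
      have h1 : (k:ℤ) + 1 + l = ((k:ℤ) + l) + 1 := by ring
      rw [h1, twc_succ, ih, twc_succ, map_mul, aut_one_z, ← permz, mul_assoc]
  | pred k ih =>
      have hstep : ∀ (j : ℤ) (w : M),
          twc f α A (j - 1) w = α⁻¹ ((A ((f ^ (j-1)) w))⁻¹ * twc f α A j w) := by
        intro j w
        have h := twc_succ f α A (j-1) w
        rw [sub_add_cancel] at h
        rw [h]
        simp [map_mul]
      have h1 : (-(k:ℤ) - 1 + l) = ((-(k:ℤ) + l) - 1) := by ring
      rw [h1, hstep, ih, hstep, ← permz,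
        show (-(k:ℤ) - 1 + l) = (-(k:ℤ) + l - 1) by ring,
        ← mul_assoc, map_mul, aut_inv_z]

end Coc

section Key
variable {M G : Type*} [Group G] (f : Equiv.Perm M) (α : MulAut G) (A : M → G)

lemma key_alg (k m : ℤ) (y z : M) :
    (α ^ (-k)) ((twc f α A k ((f ^ m) z))⁻¹ * twc f α A k ((f ^ m) y)) =
      twc f α A m z *
        (α ^ m) ((α ^ (-(k+m))) ((twc f α A (k+m) z)⁻¹ * twc f α A (k+m) y)) *
        (twc f α A m y)⁻¹ := by
  have hw : ∀ w, twc f α A k ((f ^ m) w)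
      = twc f α A (k+m) w * ((α ^ k) (twc f α A m w))⁻¹ := by
    intro w; rw [twc_add f α A k m w]; group
  rw [hw y, hw z]
  simp only [mul_inv_rev, inv_inv, map_mul, map_inv, autz, neg_add_cancel, zpow_zero,
    MulAut.one_apply, mul_assoc]
  rw [show m + -(k+m) = -k by ring]

end Key


section Anal
open Filter
open scoped Matrix.Norms.L2Operator

variable {d : ℕ}

lemma GL_tendsto_mul (P Q : GL (Fin d) ℝ) (g : ℕ → GL (Fin d) ℝ) (H : GL (Fin d) ℝ)
    (h : Tendsto (fun n => ((g n : GL (Fin d) ℝ) : Matrix (Fin d) (Fin d) ℝ))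
      atTop (nhds (H : Matrix (Fin d) (Fin d) ℝ))) :
    Tendsto (fun n => ((P * g n * Q : GL (Fin d) ℝ) : Matrix (Fin d) (Fin d) ℝ))
      atTop (nhds ((P * H * Q : GL (Fin d) ℝ) : Matrix (Fin d) (Fin d) ℝ)) := by
  simp only [Units.val_mul]
  exact (h.const_mul _).mul_const _

lemma GL_tendsto_aut (α : MulAut (GL (Fin d) ℝ)) (m : ℤ) (K : ℝ)
    (hK : ∀ T₁ T₂ : GL (Fin d) ℝ,
      ‖(((α ^ m) T₁ : GL (Fin d) ℝ) : Matrix (Fin d) (Fin d) ℝ) -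
        (((α ^ m) T₂ : GL (Fin d) ℝ) : Matrix (Fin d) (Fin d) ℝ)‖ ≤
        K * ‖(T₁ : Matrix (Fin d) (Fin d) ℝ) - (T₂ : Matrix (Fin d) (Fin d) ℝ)‖)
    (g : ℕ → GL (Fin d) ℝ) (H : GL (Fin d) ℝ)
    (h : Tendsto (fun n => ((g n : GL (Fin d) ℝ) : Matrix (Fin d) (Fin d) ℝ))
      atTop (nhds (H : Matrix (Fin d) (Fin d) ℝ))) :
    Tendsto (fun n => (((α ^ m) (g n) : GL (Fin d) ℝ) : Matrix (Fin d) (Fin d) ℝ))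
      atTop (nhds (((α ^ m) H : GL (Fin d) ℝ) : Matrix (Fin d) (Fin d) ℝ)) := by
  rw [tendsto_iff_norm_sub_tendsto_zero] at h ⊢
  refine squeeze_zero (fun n => norm_nonneg _) (fun n => hK (g n) H) ?_
  simpa using h.const_mul K

lemma tendsto_G_shift (G : ℤ → GL (Fin d) ℝ) (L : Matrix (Fin d) (Fin d) ℝ)
    (s t : ℕ → ℤ)
    (h : Tendsto (fun n : ℕ => ((G (s n) : GL (Fin d) ℝ) : Matrix (Fin d) (Fin d) ℝ))
      atTop (nhds L))
    (φ : ℕ → ℕ) (hφ : Tendsto φ atTop atTop)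
    (hst : ∀ᶠ n in atTop, s (φ n) = t n) :
    Tendsto (fun n : ℕ => ((G (t n) : GL (Fin d) ℝ) : Matrix (Fin d) (Fin d) ℝ))
      atTop (nhds L) := by
  refine (h.comp hφ).congr' ?_
  filter_upwards [hst] with n hn
  simp [Function.comp, hn]

end Anal


/-- **Equivariance of holonomies.**
`H^{s,A,α}_{f^m(y) f^m(z)} = A_α^m(z) · α^m(H^{s,A,α}_{yz}) · A_α^m(y)⁻¹` for all
`y, z ∈ W^s(x)` and `m ∈ ℤ`, and analogously for the unstable holonomies on `W^u(x)`. -/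
theorem holonomies_equivariance {M : Type*} [MetricSpace M] [CompactSpace M] {d : ℕ}
    (f : M ≃ₜ M) (C ε lam τ ν : ℝ) (hν : 0 < ν)
    (hf : IsHyperbolicLPS f C ε lam τ)
    (A : M → GL (Fin d) ℝ) (α : MulAut (GL (Fin d) ℝ))
    (hA : IsHolder ν A) (hFA : FiberBunched f.toEquiv α A ν lam) :
    (∀ x : M, ∀ y ∈ globalStable f.toEquiv ε x, ∀ z ∈ globalStable f.toEquiv ε x,
      ∀ (m : ℤ) (H H' : GL (Fin d) ℝ),
        IsStableHol f.toEquiv α A y z H →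
          IsStableHol f.toEquiv α A ((f.toEquiv ^ m) y) ((f.toEquiv ^ m) z) H' →
            H' = twc f.toEquiv α A m z * (α ^ m) H * (twc f.toEquiv α A m y)⁻¹) ∧
    (∀ x : M, ∀ y ∈ globalUnstable f.toEquiv ε x, ∀ z ∈ globalUnstable f.toEquiv ε x,
      ∀ (m : ℤ) (H H' : GL (Fin d) ℝ),
        IsUnstableHol f.toEquiv α A y z H →
          IsUnstableHol f.toEquiv α A ((f.toEquiv ^ m) y) ((f.toEquiv ^ m) z) H' →
            H' = twc f.toEquiv α A m z * (α ^ m) H * (twc f.toEquiv α A m y)⁻¹) := by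

  obtain ⟨ρ, θ, hρ, hθ, hlt, C0, hC0, hi, hii, hiii⟩ := hFA
  constructor
  · rintro x y hy z hz m H H' hH hH'
    set G : ℤ → GL (Fin d) ℝ :=
      fun k => (α ^ (-k)) ((twc f.toEquiv α A k z)⁻¹ * twc f.toEquiv α A k y) with hG
    have hH2 : Filter.Tendsto
        (fun n : ℕ => ((G ((n : ℕ) : ℤ) : GL (Fin d) ℝ) : Matrix (Fin d) (Fin d) ℝ))
        Filter.atTop (nhds (H : Matrix (Fin d) (Fin d) ℝ)) := hH
    have hφ : Filter.Tendsto (fun n : ℕ => ((n : ℤ) + m).toNat)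
        Filter.atTop Filter.atTop :=
      Filter.tendsto_atTop_atTop.2 fun b => ⟨b + m.natAbs, fun n hn => by omega⟩
    have hst : ∀ᶠ n : ℕ in Filter.atTop,
        ((((n : ℤ) + m).toNat : ℕ) : ℤ) = (n : ℤ) + m := by
      filter_upwards [Filter.eventually_ge_atTop m.natAbs] with n hn
      omega
    have h1 := tendsto_G_shift G (H : Matrix (Fin d) (Fin d) ℝ)
      (fun n : ℕ => (n : ℤ)) (fun n : ℕ => (n : ℤ) + m) hH2
      (fun n : ℕ => ((n : ℤ) + m).toNat) hφ hst
    have h2 := GL_tendsto_aut α m (C0 * Real.exp (ρ * |(m : ℝ)|)) (hii m) _ _ h1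
    have h3 := GL_tendsto_mul (twc f.toEquiv α A m z) ((twc f.toEquiv α A m y)⁻¹) _ _ h2
    have hH'2 : Filter.Tendsto
        (fun n : ℕ => ((twc f.toEquiv α A m z * (α ^ m) (G ((n : ℤ) + m)) *
            (twc f.toEquiv α A m y)⁻¹ : GL (Fin d) ℝ) : Matrix (Fin d) (Fin d) ℝ))
        Filter.atTop (nhds (H' : Matrix (Fin d) (Fin d) ℝ)) :=
      Filter.Tendsto.congr
        (fun n : ℕ => congrArg (fun u : GL (Fin d) ℝ => (u : Matrix (Fin d) (Fin d) ℝ))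
          (key_alg f.toEquiv α A ((n : ℕ) : ℤ) m y z)) hH'
    exact Units.ext (tendsto_nhds_unique hH'2 h3)
  · rintro x y hy z hz m H H' hH hH'
    set G : ℤ → GL (Fin d) ℝ :=
      fun k => (α ^ (-k)) ((twc f.toEquiv α A k z)⁻¹ * twc f.toEquiv α A k y) with hG
    have e : ∀ n : ℕ,
        (α ^ ((n : ℕ) : ℤ)) ((twc f.toEquiv α A (-((n : ℕ) : ℤ)) z)⁻¹ *
          twc f.toEquiv α A (-((n : ℕ) : ℤ)) y) = G (-((n : ℕ) : ℤ)) := by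
      intro n
      simp only [hG, neg_neg]
    have hH2 : Filter.Tendsto
        (fun n : ℕ => ((G (-((n : ℕ) : ℤ)) : GL (Fin d) ℝ) : Matrix (Fin d) (Fin d) ℝ))
        Filter.atTop (nhds (H : Matrix (Fin d) (Fin d) ℝ)) :=
      Filter.Tendsto.congr
        (fun n : ℕ => congrArg (fun u : GL (Fin d) ℝ => (u : Matrix (Fin d) (Fin d) ℝ))
          (e n)) hH
    have hφ : Filter.Tendsto (fun n : ℕ => ((n : ℤ) - m).toNat)
        Filter.atTop Filter.atTop :=
      Filter.tendsto_atTop_atTop.2 fun b => ⟨b + m.natAbs, fun n hn => by omega⟩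
    have hst : ∀ᶠ n : ℕ in Filter.atTop,
        -(((((n : ℤ) - m).toNat : ℕ)) : ℤ) = -(n : ℤ) + m := by
      filter_upwards [Filter.eventually_ge_atTop m.natAbs] with n hn
      omega
    have h1 := tendsto_G_shift G (H : Matrix (Fin d) (Fin d) ℝ)
      (fun n : ℕ => -((n : ℕ) : ℤ)) (fun n : ℕ => -((n : ℕ) : ℤ) + m) hH2
      (fun n : ℕ => ((n : ℤ) - m).toNat) hφ hst
    have h2 := GL_tendsto_aut α m (C0 * Real.exp (ρ * |(m : ℝ)|)) (hii m) _ _ h1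
    have h3 := GL_tendsto_mul (twc f.toEquiv α A m z) ((twc f.toEquiv α A m y)⁻¹) _ _ h2
    have key : ∀ n : ℕ,
        (α ^ ((n : ℕ) : ℤ)) ((twc f.toEquiv α A (-((n : ℕ) : ℤ)) ((f.toEquiv ^ m) z))⁻¹ *
            twc f.toEquiv α A (-((n : ℕ) : ℤ)) ((f.toEquiv ^ m) y)) =
          twc f.toEquiv α A m z * (α ^ m) (G (-((n : ℕ) : ℤ) + m)) *
            (twc f.toEquiv α A m y)⁻¹ := by
      intro n
      have h := key_alg f.toEquiv α A (-((n : ℕ) : ℤ)) m y z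
      rw [neg_neg] at h
      exact h
    have hH'2 : Filter.Tendsto
        (fun n : ℕ => ((twc f.toEquiv α A m z * (α ^ m) (G (-((n : ℕ) : ℤ) + m)) *
            (twc f.toEquiv α A m y)⁻¹ : GL (Fin d) ℝ) : Matrix (Fin d) (Fin d) ℝ))
        Filter.atTop (nhds (H' : Matrix (Fin d) (Fin d) ℝ)) :=
      Filter.Tendsto.congr
        (fun n : ℕ => congrArg (fun u : GL (Fin d) ℝ => (u : Matrix (Fin d) (Fin d) ℝ))
          (key n)) hH'
    exact Units.ext (tendsto_nhds_unique hH'2 h3)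
end

section
/- Let f : M → M be a hyperbolic homeomorphism with local product structure on a compact metric space (M,d) with constants C, ε, λ, let A : M → GL(d,ℝ) be ν-Hölder continuous, α an automorphism of GL(d,ℝ), and suppose the α-twisted cocycle A_α is fiber-bunched with constants ρ, θ. Let δ > 0 be such that 5ρ + 2θ + δ < λν. Then there exists a constant C' > 0, depending only on A, α, f and δ, such that ‖α^{-n}(A_α^n(y))‖ · ‖α^{-n}(A_α^n(x)^{-1})‖ ≤ C' e^{(4ρ + 2θ + δ)n} for every x ∈ M, every y ∈ W^s_ε(x) and every integer n ≥ 0. -/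
open scoped Matrix.Norms.L2Operator

noncomputable section AuxGrowth

/-- The pulled-back twisted cocycle `α^{-k}(A_α^k(x))`. -/
def Qc {M : Type*} {d : ℕ} (f : Equiv.Perm M) (α : MulAut (GL (Fin d) ℝ))
    (A : M → GL (Fin d) ℝ) (k : ℕ) (x : M) : GL (Fin d) ℝ :=
  (α ^ (-(k : ℤ))) (twcN f α A k x)

lemma Qc_succ {M : Type*} {d : ℕ} (f : Equiv.Perm M) (α : MulAut (GL (Fin d) ℝ))
    (A : M → GL (Fin d) ℝ) (k : ℕ) (x : M) :
    Qc f α A (k + 1) x = (α ^ (-(k : ℤ) - 1)) (A ((f ^ k) x)) * Qc f α A k x := by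
  have h1 : (-((k + 1 : ℕ) : ℤ)) = -(k : ℤ) - 1 := by push_cast; ring
  unfold Qc
  rw [show twcN f α A (k + 1) x = A ((f ^ k) x) * α (twcN f α A k x) from rfl, h1, map_mul]
  congr 1
  have h2 : (α ^ (-(k : ℤ) - 1)) (α (twcN f α A k x))
      = ((α ^ (-(k : ℤ) - 1)) * α ^ (1 : ℤ)) (twcN f α A k x) := by
    rw [zpow_one]; rfl
  rw [h2, ← zpow_add]
  norm_num

lemma mat_key {R : Type*} [Ring R] (A B E Ai Ci : R) (hA : Ai * A = 1) :
    Ci * Ai * (B * E) = Ci * E + Ci * Ai * (B - A) * E := by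
  have h1 : Ci * Ai * (B - A) * E = Ci * Ai * (B * E) - Ci * E := by
    have h2 : Ci * Ai * A = Ci := by rw [mul_assoc, hA, mul_one]
    calc Ci * Ai * (B - A) * E = Ci * Ai * B * E - Ci * Ai * A * E := by
          rw [mul_sub, sub_mul]
      _ = Ci * Ai * (B * E) - Ci * E := by rw [h2, mul_assoc (Ci * Ai)]
  rw [h1]
  abel

lemma gl_key {d : ℕ} (a b c e : GL (Fin d) ℝ) :
    (((a * c)⁻¹ * (b * e) : GL (Fin d) ℝ) : Matrix (Fin d) (Fin d) ℝ)
      = ((c⁻¹ * e : GL (Fin d) ℝ) : Matrix (Fin d) (Fin d) ℝ)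
        + (((a * c)⁻¹ : GL (Fin d) ℝ) : Matrix (Fin d) (Fin d) ℝ)
          * ((b : Matrix (Fin d) (Fin d) ℝ) - (a : Matrix (Fin d) (Fin d) ℝ))
          * ((e : GL (Fin d) ℝ) : Matrix (Fin d) (Fin d) ℝ) := by
  have ha : ((a⁻¹ : GL (Fin d) ℝ) : Matrix (Fin d) (Fin d) ℝ) * (a : Matrix (Fin d) (Fin d) ℝ)
      = 1 := a.inv_mul
  simp only [mul_inv_rev, Units.val_mul]
  exact mat_key _ _ _ _ _ ha

open scoped Matrix.Norms.L2Operator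

lemma norm_one_le_mat {d : ℕ} : ‖(1 : Matrix (Fin d) (Fin d) ℝ)‖ ≤ 1 := by
  rw [Matrix.cstar_norm_def, map_one, ContinuousLinearMap.one_def]
  exact ContinuousLinearMap.norm_id_le

open scoped Matrix.Norms.L2Operator in
lemma mnorm_mul_le {d : ℕ} (a b : Matrix (Fin d) (Fin d) ℝ) : ‖a * b‖ ≤ ‖a‖ * ‖b‖ :=
  norm_mul_le a b

lemma my_gronwall (c q : ℝ) (hc : 0 ≤ c) (hq0 : 0 ≤ q) (hq1 : q < 1) (w : ℕ → ℝ)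
    (h0 : w 0 ≤ 1) (hstep : ∀ k, w (k + 1) ≤ w k * (1 + c * q ^ k)) :
    ∀ n, w n ≤ Real.exp (c * (1 - q)⁻¹) := by
  have hwle : ∀ n, w n ≤ Real.exp (c * ∑ i ∈ Finset.range n, q ^ i) := by
    intro n
    induction n with
    | zero => simpa using h0
    | succ n ih =>
      have h1 : (0:ℝ) ≤ 1 + c * q ^ n := by positivity
      calc w (n + 1) ≤ w n * (1 + c * q ^ n) := hstep n
        _ ≤ Real.exp (c * ∑ i ∈ Finset.range n, q ^ i) * Real.exp (c * q ^ n) := by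
            have h2 := Real.add_one_le_exp (c * q ^ n)
            nlinarith [Real.exp_pos (c * q ^ n), Real.exp_pos (c * ∑ i ∈ Finset.range n, q ^ i)]
        _ = Real.exp (c * ∑ i ∈ Finset.range (n + 1), q ^ i) := by
            rw [← Real.exp_add, Finset.sum_range_succ, mul_add]
  intro n
  refine (hwle n).trans (Real.exp_le_exp.mpr ?_)
  have hsum : ∑ i ∈ Finset.range n, q ^ i ≤ (1 - q)⁻¹ :=
    sum_le_hasSum _ (fun i _ => by positivity) (hasSum_geometric_of_lt_one hq0 hq1)
  exact mul_le_mul_of_nonneg_left hsum hc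

lemma inv_norm_bound {M : Type*} [MetricSpace M] [CompactSpace M] {d : ℕ}
    (ν : ℝ) (hν : 0 < ν) (A : M → GL (Fin d) ℝ) (hA : IsHolder ν A) :
    ∃ K ≥ 0, ∀ z : M, ‖(((A z)⁻¹ : GL (Fin d) ℝ) : Matrix (Fin d) (Fin d) ℝ)‖ ≤ K := by
  obtain ⟨CH, hCH, hHold⟩ := hA
  have hcont : Continuous fun z : M => ((A z : GL (Fin d) ℝ) : Matrix (Fin d) (Fin d) ℝ) := by
    rw [continuous_iff_continuousAt]
    intro z0
    rw [ContinuousAt, tendsto_iff_dist_tendsto_zero]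
    have hb : Filter.Tendsto (fun z : M => CH * dist z z0 ^ ν) (nhds z0) (nhds 0) := by
      have h1 : Filter.Tendsto (fun z : M => dist z z0) (nhds z0) (nhds 0) := by
        have := (continuous_id.dist (continuous_const (y := z0))).tendsto z0
        simpa using this
      have h2 : ContinuousAt (fun t : ℝ => t ^ ν) 0 :=
        Real.continuousAt_rpow_const 0 ν (Or.inr hν.le)
      have h3 := h2.tendsto.comp h1
      rw [Real.zero_rpow hν.ne'] at h3
      simpa using h3.const_mul CH
    refine squeeze_zero (fun z => dist_nonneg) (fun z => ?_) hb
    rw [dist_eq_norm]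
    exact hHold z z0
  have hcontinv : Continuous fun z : M =>
      (((A z)⁻¹ : GL (Fin d) ℝ) : Matrix (Fin d) (Fin d) ℝ) := by
    have heq : ∀ z : M, (((A z)⁻¹ : GL (Fin d) ℝ) : Matrix (Fin d) (Fin d) ℝ)
        = Ring.inverse ((A z : GL (Fin d) ℝ) : Matrix (Fin d) (Fin d) ℝ) :=
      fun z => (Ring.inverse_unit (A z)).symm
    simp only [heq]
    rw [continuous_iff_continuousAt]
    intro z0
    have h5 : ContinuousAt (fun z : M => ((A z : GL (Fin d) ℝ) : Matrix (Fin d) (Fin d) ℝ)) z0 :=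
      hcont.continuousAt
    have h6 : ContinuousAt (Ring.inverse : Matrix (Fin d) (Fin d) ℝ → Matrix (Fin d) (Fin d) ℝ)
        (((A z0) : GL (Fin d) ℝ) : Matrix (Fin d) (Fin d) ℝ) :=
      NormedRing.inverse_continuousAt (A z0)
    exact ContinuousAt.comp
      (f := fun z : M => ((A z : GL (Fin d) ℝ) : Matrix (Fin d) (Fin d) ℝ)) h6 h5
  obtain ⟨K0, hK0⟩ := (isCompact_range hcontinv.norm).bddAbove
  exact ⟨max K0 0, le_max_right _ _,
    fun z => le_max_of_le_left (hK0 (Set.mem_range_self z))⟩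

end AuxGrowth

set_option maxHeartbeats 2000000 in
/-- **Proposition (auxiliary growth estimate).** If `5ρ + 2θ + δ < λν` then there is
`C' > 0`, depending only on `A`, `α`, `f`, `δ`, with
`‖α^{-n}(A_α^n(y))‖·‖α^{-n}(A_α^n(x)⁻¹)‖ ≤ C' e^{(4ρ+2θ+δ)n}` for all `y ∈ W^s_ε(x)`, `n ≥ 0`. -/
theorem auxiliary_growth_estimate {M : Type*} [MetricSpace M] [CompactSpace M] {d : ℕ}
    (f : M ≃ₜ M) (C ε lam τ ν : ℝ) (hν : 0 < ν)
    (hf : IsHyperbolicLPS f C ε lam τ)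
    (A : M → GL (Fin d) ℝ) (α : MulAut (GL (Fin d) ℝ))
    (hA : IsHolder ν A) (ρ θ δ : ℝ) (hρ : 0 < ρ) (hθ : 0 < θ) (hδ : 0 < δ)
    (hFB : FiberBunchedWith f.toEquiv α A ρ θ)
    (hlt : 5 * ρ + 2 * θ + δ < lam * ν) :
    ∃ C' > 0, ∀ x : M, ∀ y ∈ localStable f.toEquiv ε x, ∀ n : ℕ,
      ‖(((α ^ (-(n : ℤ))) (twc f.toEquiv α A n y) : GL (Fin d) ℝ) :
          Matrix (Fin d) (Fin d) ℝ)‖ *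
        ‖(((α ^ (-(n : ℤ))) ((twc f.toEquiv α A n x)⁻¹) : GL (Fin d) ℝ) :
          Matrix (Fin d) (Fin d) ℝ)‖ ≤
        C' * Real.exp ((4 * ρ + 2 * θ + δ) * n) := by
  classical
  obtain ⟨CB, hCB, hFB1, hFB2, hFB3⟩ := hFB
  obtain ⟨K', hK'0, hK'⟩ := inv_norm_bound ν hν A hA
  obtain ⟨CH, hCH, hHold⟩ := hA
  have hC := hf.C_pos
  have hε := hf.eps_pos
  set F := f.toEquiv with hFdef
  set c₀ : ℝ := CB ^ 3 * K' * CH * (C * ε) ^ ν * Real.exp (ρ + ρ) with hc₀def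
  set q : ℝ := Real.exp (θ + 2 * ρ - lam * ν) with hqdef
  have hc₀ : 0 ≤ c₀ := by positivity
  have hq0 : 0 < q := Real.exp_pos _
  have hq1 : q < 1 := by
    rw [hqdef, Real.exp_lt_one_iff]
    linarith
  set W' : ℝ := Real.exp (c₀ * (1 - q)⁻¹) with hW'def
  refine ⟨CB * W', by positivity, ?_⟩
  intro x y hy n
  -- restated bunching
  have hB : ∀ (k : ℕ) (z : M),
      ‖((Qc F α A k z : GL (Fin d) ℝ) : Matrix (Fin d) (Fin d) ℝ)‖ *
        ‖(((Qc F α A k z)⁻¹ : GL (Fin d) ℝ) : Matrix (Fin d) (Fin d) ℝ)‖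
        ≤ CB * Real.exp (θ * k) := by
    intro k z
    have h := (hFB1 (k : ℤ) z).le
    have habs : |((k : ℤ) : ℝ)| = (k : ℝ) := by
      rw [Int.cast_natCast]
      exact abs_of_nonneg (Nat.cast_nonneg k)
    rw [habs] at h
    have e2 : (α ^ (-(k : ℤ))) ((twc F α A (k : ℤ) z)⁻¹) = (Qc F α A k z)⁻¹ := by
      rw [show twc F α A (k : ℤ) z = twcN F α A k z from rfl]
      exact map_inv _ _
    rw [e2] at h
    exact h
  -- stable contraction data
  have hx : x ∈ localStable F ε x := fun k => by simp [hε.le]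
  have hdxy : dist x y ≤ ε := by simpa using hy 0
  have hdist : ∀ k : ℕ, dist ((F ^ k) x) ((F ^ k) y) ≤ C * ε * Real.exp (-lam * k) := by
    intro k
    have h := hf.stable_contr x x y hx hy k
    have h2 : C * Real.exp (-lam * (k : ℝ)) * dist x y ≤ C * Real.exp (-lam * (k : ℝ)) * ε :=
      mul_le_mul_of_nonneg_left hdxy (by positivity)
    calc dist ((F ^ k) x) ((F ^ k) y) ≤ C * Real.exp (-lam * k) * dist x y := h
      _ ≤ C * Real.exp (-lam * (k : ℝ)) * ε := h2
      _ = C * ε * Real.exp (-lam * k) := by ring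
  -- single-step factors
  have hgdiff : ∀ k : ℕ,
      ‖(((α ^ (-(k : ℤ) - 1)) (A ((F ^ k) y)) : GL (Fin d) ℝ) : Matrix (Fin d) (Fin d) ℝ)
        - (((α ^ (-(k : ℤ) - 1)) (A ((F ^ k) x)) : GL (Fin d) ℝ) : Matrix (Fin d) (Fin d) ℝ)‖
      ≤ CB * Real.exp (ρ * ((k : ℝ) + 1)) *
          (CH * ((C * ε) ^ ν * Real.exp (-lam * (k : ℝ) * ν))) := by
    intro k
    have habs : |((-(k : ℤ) - 1 : ℤ) : ℝ)| = (k : ℝ) + 1 := by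
      rw [show ((-(k : ℤ) - 1 : ℤ) : ℝ) = -((k : ℝ) + 1) by push_cast; ring, abs_neg]
      exact abs_of_nonneg (by positivity)
    have h2 := hFB2 (-(k : ℤ) - 1) (A ((F ^ k) y)) (A ((F ^ k) x))
    rw [habs] at h2
    refine h2.trans ?_
    have hd : dist ((F ^ k) y) ((F ^ k) x) ^ ν
        ≤ (C * ε) ^ ν * Real.exp (-lam * (k : ℝ) * ν) := by
      calc dist ((F ^ k) y) ((F ^ k) x) ^ ν
          = dist ((F ^ k) x) ((F ^ k) y) ^ ν := by rw [dist_comm]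
        _ ≤ (C * ε * Real.exp (-lam * k)) ^ ν :=
            Real.rpow_le_rpow dist_nonneg (hdist k) hν.le
        _ = (C * ε) ^ ν * Real.exp (-lam * (k : ℝ) * ν) := by
            rw [Real.mul_rpow (by positivity) (Real.exp_nonneg _), ← Real.exp_mul]
    have hle : ‖((A ((F ^ k) y) : GL (Fin d) ℝ) : Matrix (Fin d) (Fin d) ℝ)
        - ((A ((F ^ k) x) : GL (Fin d) ℝ) : Matrix (Fin d) (Fin d) ℝ)‖
        ≤ CH * ((C * ε) ^ ν * Real.exp (-lam * (k : ℝ) * ν)) := by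
      refine (hHold _ _).trans ?_
      exact mul_le_mul_of_nonneg_left hd hCH.le
    exact mul_le_mul_of_nonneg_left hle (by positivity)
  have hginv : ∀ k : ℕ,
      ‖((((α ^ (-(k : ℤ) - 1)) (A ((F ^ k) x)))⁻¹ : GL (Fin d) ℝ) : Matrix (Fin d) (Fin d) ℝ)‖
      ≤ CB * Real.exp (ρ * ((k : ℝ) + 1)) * K' := by
    intro k
    have habs : |((-(k : ℤ) - 1 : ℤ) : ℝ)| = (k : ℝ) + 1 := by
      rw [show ((-(k : ℤ) - 1 : ℤ) : ℝ) = -((k : ℝ) + 1) by push_cast; ring, abs_neg]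
      exact abs_of_nonneg (by positivity)
    have e : ((α ^ (-(k : ℤ) - 1)) (A ((F ^ k) x)))⁻¹
        = (α ^ (-(k : ℤ) - 1)) ((A ((F ^ k) x))⁻¹) := (map_inv _ _).symm
    rw [e]
    have h3 := hFB3 (-(k : ℤ) - 1) ((A ((F ^ k) x))⁻¹)
    rw [habs] at h3
    exact h3.trans (mul_le_mul_of_nonneg_left (hK' _) (by positivity))
  -- base case for the comparison sequence
  have hw0 : ‖(((Qc F α A 0 x)⁻¹ * Qc F α A 0 y : GL (Fin d) ℝ) :
      Matrix (Fin d) (Fin d) ℝ)‖ ≤ 1 := by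
    have hq0x : Qc F α A 0 x = 1 := by
      unfold Qc
      rw [show twcN F α A 0 x = 1 from rfl]
      simp
    have hq0y : Qc F α A 0 y = 1 := by
      unfold Qc
      rw [show twcN F α A 0 y = 1 from rfl]
      simp
    rw [hq0x, hq0y, inv_one, one_mul, Units.val_one]
    exact norm_one_le_mat
  -- comparison with the cocycle at x
  have hQy : ∀ k : ℕ, ‖((Qc F α A k y : GL (Fin d) ℝ) : Matrix (Fin d) (Fin d) ℝ)‖
      ≤ ‖((Qc F α A k x : GL (Fin d) ℝ) : Matrix (Fin d) (Fin d) ℝ)‖ *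
        ‖(((Qc F α A k x)⁻¹ * Qc F α A k y : GL (Fin d) ℝ) : Matrix (Fin d) (Fin d) ℝ)‖ := by
    intro k
    have e : Qc F α A k y = Qc F α A k x * ((Qc F α A k x)⁻¹ * Qc F α A k y) := by
      rw [mul_inv_cancel_left]
    nth_rewrite 1 [e]
    rw [Units.val_mul]
    exact mnorm_mul_le _ _
  -- the step inequality
  have hstep : ∀ k : ℕ,
      ‖(((Qc F α A (k+1) x)⁻¹ * Qc F α A (k+1) y : GL (Fin d) ℝ) :
          Matrix (Fin d) (Fin d) ℝ)‖
      ≤ ‖(((Qc F α A k x)⁻¹ * Qc F α A k y : GL (Fin d) ℝ) :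
          Matrix (Fin d) (Fin d) ℝ)‖ * (1 + c₀ * q ^ k) := by
    intro k
    have hrec : (((Qc F α A (k+1) x)⁻¹ * Qc F α A (k+1) y : GL (Fin d) ℝ) :
          Matrix (Fin d) (Fin d) ℝ)
        = (((Qc F α A k x)⁻¹ * Qc F α A k y : GL (Fin d) ℝ) : Matrix (Fin d) (Fin d) ℝ)
          + (((Qc F α A (k+1) x)⁻¹ : GL (Fin d) ℝ) : Matrix (Fin d) (Fin d) ℝ)
            * ((((α ^ (-(k : ℤ) - 1)) (A ((F ^ k) y)) : GL (Fin d) ℝ) :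
                  Matrix (Fin d) (Fin d) ℝ)
              - (((α ^ (-(k : ℤ) - 1)) (A ((F ^ k) x)) : GL (Fin d) ℝ) :
                  Matrix (Fin d) (Fin d) ℝ))
            * ((Qc F α A k y : GL (Fin d) ℝ) : Matrix (Fin d) (Fin d) ℝ) := by
      rw [Qc_succ F α A k x, Qc_succ F α A k y]
      exact gl_key _ _ _ _
    have hQinv : ‖(((Qc F α A (k+1) x)⁻¹ : GL (Fin d) ℝ) : Matrix (Fin d) (Fin d) ℝ)‖
        ≤ ‖(((Qc F α A k x)⁻¹ : GL (Fin d) ℝ) : Matrix (Fin d) (Fin d) ℝ)‖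
          * (CB * Real.exp (ρ * ((k : ℝ) + 1)) * K') := by
      have e : (Qc F α A (k+1) x)⁻¹
          = (Qc F α A k x)⁻¹ * ((α ^ (-(k : ℤ) - 1)) (A ((F ^ k) x)))⁻¹ := by
        rw [Qc_succ F α A k x, mul_inv_rev]
      rw [e, Units.val_mul]
      exact (mnorm_mul_le _ _).trans (mul_le_mul_of_nonneg_left (hginv k) (norm_nonneg _))
    have hterm : ‖(((Qc F α A (k+1) x)⁻¹ : GL (Fin d) ℝ) : Matrix (Fin d) (Fin d) ℝ)
            * ((((α ^ (-(k : ℤ) - 1)) (A ((F ^ k) y)) : GL (Fin d) ℝ) :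
                  Matrix (Fin d) (Fin d) ℝ)
              - (((α ^ (-(k : ℤ) - 1)) (A ((F ^ k) x)) : GL (Fin d) ℝ) :
                  Matrix (Fin d) (Fin d) ℝ))
            * ((Qc F α A k y : GL (Fin d) ℝ) : Matrix (Fin d) (Fin d) ℝ)‖
        ≤ c₀ * q ^ k *
          ‖(((Qc F α A k x)⁻¹ * Qc F α A k y : GL (Fin d) ℝ) :
            Matrix (Fin d) (Fin d) ℝ)‖ := by
      have hn1 : ‖(((Qc F α A (k+1) x)⁻¹ : GL (Fin d) ℝ) : Matrix (Fin d) (Fin d) ℝ)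
            * ((((α ^ (-(k : ℤ) - 1)) (A ((F ^ k) y)) : GL (Fin d) ℝ) :
                  Matrix (Fin d) (Fin d) ℝ)
              - (((α ^ (-(k : ℤ) - 1)) (A ((F ^ k) x)) : GL (Fin d) ℝ) :
                  Matrix (Fin d) (Fin d) ℝ))
            * ((Qc F α A k y : GL (Fin d) ℝ) : Matrix (Fin d) (Fin d) ℝ)‖
          ≤ ‖(((Qc F α A (k+1) x)⁻¹ : GL (Fin d) ℝ) : Matrix (Fin d) (Fin d) ℝ)‖
            * ‖(((α ^ (-(k : ℤ) - 1)) (A ((F ^ k) y)) : GL (Fin d) ℝ) :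
                  Matrix (Fin d) (Fin d) ℝ)
              - ((((α ^ (-(k : ℤ) - 1)) (A ((F ^ k) x)) : GL (Fin d) ℝ)) :
                  Matrix (Fin d) (Fin d) ℝ)‖
            * ‖((Qc F α A k y : GL (Fin d) ℝ) : Matrix (Fin d) (Fin d) ℝ)‖ :=
        (mnorm_mul_le _ _).trans
          (mul_le_mul_of_nonneg_right (mnorm_mul_le _ _) (norm_nonneg _))
      refine hn1.trans ?_
      have h1 : ‖(((Qc F α A (k+1) x)⁻¹ : GL (Fin d) ℝ) : Matrix (Fin d) (Fin d) ℝ)‖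
            * ‖(((α ^ (-(k : ℤ) - 1)) (A ((F ^ k) y)) : GL (Fin d) ℝ) :
                  Matrix (Fin d) (Fin d) ℝ)
              - ((((α ^ (-(k : ℤ) - 1)) (A ((F ^ k) x)) : GL (Fin d) ℝ)) :
                  Matrix (Fin d) (Fin d) ℝ)‖
            * ‖((Qc F α A k y : GL (Fin d) ℝ) : Matrix (Fin d) (Fin d) ℝ)‖
          ≤ (‖(((Qc F α A k x)⁻¹ : GL (Fin d) ℝ) : Matrix (Fin d) (Fin d) ℝ)‖
              * (CB * Real.exp (ρ * ((k : ℝ) + 1)) * K'))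
            * ((CB * Real.exp (ρ * ((k : ℝ) + 1)) *
                (CH * ((C * ε) ^ ν * Real.exp (-lam * (k : ℝ) * ν))))
              * (‖((Qc F α A k x : GL (Fin d) ℝ) : Matrix (Fin d) (Fin d) ℝ)‖ *
                ‖(((Qc F α A k x)⁻¹ * Qc F α A k y : GL (Fin d) ℝ) :
                  Matrix (Fin d) (Fin d) ℝ)‖)) := by
        rw [mul_assoc]
        refine mul_le_mul hQinv (mul_le_mul (hgdiff k) (hQy k) (norm_nonneg _)
          (by positivity)) (by positivity) (by positivity)
      refine h1.trans ?_
      have hexp : Real.exp (θ * (k : ℝ)) * (Real.exp (ρ * ((k : ℝ) + 1))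
            * (Real.exp (ρ * ((k : ℝ) + 1)) * Real.exp (-lam * (k : ℝ) * ν)))
          = Real.exp (ρ + ρ) * q ^ k := by
        rw [← Real.exp_add, ← Real.exp_add, ← Real.exp_add, hqdef, ← Real.exp_nat_mul,
          ← Real.exp_add]
        congr 1
        ring
      have hBk := hB k x
      calc (‖(((Qc F α A k x)⁻¹ : GL (Fin d) ℝ) : Matrix (Fin d) (Fin d) ℝ)‖
              * (CB * Real.exp (ρ * ((k : ℝ) + 1)) * K'))
            * ((CB * Real.exp (ρ * ((k : ℝ) + 1)) *
                (CH * ((C * ε) ^ ν * Real.exp (-lam * (k : ℝ) * ν))))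
              * (‖((Qc F α A k x : GL (Fin d) ℝ) : Matrix (Fin d) (Fin d) ℝ)‖ *
                ‖(((Qc F α A k x)⁻¹ * Qc F α A k y : GL (Fin d) ℝ) :
                  Matrix (Fin d) (Fin d) ℝ)‖))
          = (‖((Qc F α A k x : GL (Fin d) ℝ) : Matrix (Fin d) (Fin d) ℝ)‖
              * ‖(((Qc F α A k x)⁻¹ : GL (Fin d) ℝ) : Matrix (Fin d) (Fin d) ℝ)‖)
            * ((CB ^ 2 * K' * CH * (C * ε) ^ ν)
              * (Real.exp (ρ * ((k : ℝ) + 1))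
                * (Real.exp (ρ * ((k : ℝ) + 1)) * Real.exp (-lam * (k : ℝ) * ν)))
              * ‖(((Qc F α A k x)⁻¹ * Qc F α A k y : GL (Fin d) ℝ) :
                  Matrix (Fin d) (Fin d) ℝ)‖) := by ring
        _ ≤ (CB * Real.exp (θ * (k : ℝ)))
            * ((CB ^ 2 * K' * CH * (C * ε) ^ ν)
              * (Real.exp (ρ * ((k : ℝ) + 1))
                * (Real.exp (ρ * ((k : ℝ) + 1)) * Real.exp (-lam * (k : ℝ) * ν)))
              * ‖(((Qc F α A k x)⁻¹ * Qc F α A k y : GL (Fin d) ℝ) :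
                  Matrix (Fin d) (Fin d) ℝ)‖) := by
            refine mul_le_mul_of_nonneg_right hBk (by positivity)
        _ = (CB ^ 3 * K' * CH * (C * ε) ^ ν)
            * (Real.exp (θ * (k : ℝ)) * (Real.exp (ρ * ((k : ℝ) + 1))
              * (Real.exp (ρ * ((k : ℝ) + 1)) * Real.exp (-lam * (k : ℝ) * ν))))
            * ‖(((Qc F α A k x)⁻¹ * Qc F α A k y : GL (Fin d) ℝ) :
                Matrix (Fin d) (Fin d) ℝ)‖ := by ring
        _ = c₀ * q ^ k *
            ‖(((Qc F α A k x)⁻¹ * Qc F α A k y : GL (Fin d) ℝ) :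
                Matrix (Fin d) (Fin d) ℝ)‖ := by
            rw [hexp, hc₀def]
            ring
    calc ‖(((Qc F α A (k+1) x)⁻¹ * Qc F α A (k+1) y : GL (Fin d) ℝ) :
          Matrix (Fin d) (Fin d) ℝ)‖
        ≤ ‖(((Qc F α A k x)⁻¹ * Qc F α A k y : GL (Fin d) ℝ) :
            Matrix (Fin d) (Fin d) ℝ)‖
          + c₀ * q ^ k * ‖(((Qc F α A k x)⁻¹ * Qc F α A k y : GL (Fin d) ℝ) :
            Matrix (Fin d) (Fin d) ℝ)‖ := by
          rw [hrec]
          exact (norm_add_le _ _).trans (add_le_add_right hterm _)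
      _ = ‖(((Qc F α A k x)⁻¹ * Qc F α A k y : GL (Fin d) ℝ) :
            Matrix (Fin d) (Fin d) ℝ)‖ * (1 + c₀ * q ^ k) := by ring
  -- Gronwall
  have hgron := my_gronwall c₀ q hc₀ hq0.le hq1
    (fun k => ‖(((Qc F α A k x)⁻¹ * Qc F α A k y : GL (Fin d) ℝ) :
        Matrix (Fin d) (Fin d) ℝ)‖) hw0 hstep
  -- conclusion
  have e1 : (α ^ (-(n : ℤ))) (twc F α A (n : ℤ) y) = Qc F α A n y := rfl
  have e2 : (α ^ (-(n : ℤ))) ((twc F α A (n : ℤ) x)⁻¹) = (Qc F α A n x)⁻¹ := by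
    rw [show twc F α A (n : ℤ) x = twcN F α A n x from rfl]
    exact map_inv _ _
  rw [e1, e2]
  have hgn := hgron n
  calc ‖((Qc F α A n y : GL (Fin d) ℝ) : Matrix (Fin d) (Fin d) ℝ)‖ *
        ‖(((Qc F α A n x)⁻¹ : GL (Fin d) ℝ) : Matrix (Fin d) (Fin d) ℝ)‖
      ≤ (‖((Qc F α A n x : GL (Fin d) ℝ) : Matrix (Fin d) (Fin d) ℝ)‖ *
          ‖(((Qc F α A n x)⁻¹ * Qc F α A n y : GL (Fin d) ℝ) :
            Matrix (Fin d) (Fin d) ℝ)‖) *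
        ‖(((Qc F α A n x)⁻¹ : GL (Fin d) ℝ) : Matrix (Fin d) (Fin d) ℝ)‖ :=
        mul_le_mul_of_nonneg_right (hQy n) (norm_nonneg _)
    _ = (‖((Qc F α A n x : GL (Fin d) ℝ) : Matrix (Fin d) (Fin d) ℝ)‖ *
          ‖(((Qc F α A n x)⁻¹ : GL (Fin d) ℝ) : Matrix (Fin d) (Fin d) ℝ)‖) *
        ‖(((Qc F α A n x)⁻¹ * Qc F α A n y : GL (Fin d) ℝ) :
            Matrix (Fin d) (Fin d) ℝ)‖ := by ring
    _ ≤ (CB * Real.exp (θ * (n : ℝ))) * Real.exp (c₀ * (1 - q)⁻¹) :=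
        mul_le_mul (hB n x) hgn (norm_nonneg _) (by positivity)
    _ ≤ CB * W' * Real.exp ((4 * ρ + 2 * θ + δ) * n) := by
        rw [hW'def]
        have hn : (0 : ℝ) ≤ (n : ℝ) := Nat.cast_nonneg n
        have h9 : Real.exp (θ * (n : ℝ)) ≤ Real.exp ((4 * ρ + 2 * θ + δ) * (n : ℝ)) := by
          apply Real.exp_le_exp.mpr
          nlinarith [mul_nonneg (by linarith : (0:ℝ) ≤ 4 * ρ + θ + δ) hn]
        calc CB * Real.exp (θ * (n : ℝ)) * Real.exp (c₀ * (1 - q)⁻¹)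
            ≤ CB * Real.exp ((4 * ρ + 2 * θ + δ) * (n : ℝ)) * Real.exp (c₀ * (1 - q)⁻¹) := by
              have h10 : (0:ℝ) ≤ CB * Real.exp (c₀ * (1 - q)⁻¹) := by positivity
              nlinarith [Real.exp_pos (c₀ * (1 - q)⁻¹), Real.exp_pos (θ * (n:ℝ))]
          _ = CB * Real.exp (c₀ * (1 - q)⁻¹) * Real.exp ((4 * ρ + 2 * θ + δ) * (n : ℝ)) := by
              ring
end
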